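/- For every integer q ≥ 1 there exists an election with three voters over a candidate set of size 3^q in which every candidate defeats exactly (3^q - 1)/2 other candidates; moreover, in this election no candidate is preferred to another candidate by all three voters. -/

import Mathlib

open Finset
open scoped Classical

noncomputable def elecEquiv (q : ℕ) : Fin (3 ^ q) ≃ (Fin q → ZMod 3) :=
  (Fintype.equivFinOfCardEq (by simp)).symm

def dig (v : Fin 3) (x : ZMod 3) : ℕ := (x + (v.val : ZMod 3)).val

lemma dig_inj : ∀ (v : Fin 3) (x y : ZMod 3), dig v x = dig v y → x = y := by decide

lemma count_dig : ∀ (x y : ZMod 3), x ≠ y →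
    (univ.filter (fun v : Fin 3 => dig v x < dig v y)).card = if y = x + 1 then 2 else 1 := by
  decide

lemma cond_flip : ∀ (x y : ZMod 3), x ≠ y → (y = x + 1 ↔ ¬ x = y + 1) := by decide

noncomputable def Fv (q : ℕ) (v : Fin 3) (a : Fin (3 ^ q)) : Lex (Fin q → ℕ) :=
  toLex (fun i => dig v (elecEquiv q a i))

lemma lex_lt_iff {q : ℕ} {x y : Lex (Fin q → ℕ)} :
    x < y ↔ ∃ i, (∀ j, j < i → ofLex x j = ofLex y j) ∧ ofLex x i < ofLex y i := Iff.rfl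

lemma main_count (q : ℕ) (a b : Fin (3 ^ q)) (hab : a ≠ b) :
    ∃ i : Fin q, (∀ j, j < i → elecEquiv q a j = elecEquiv q b j) ∧
      elecEquiv q a i ≠ elecEquiv q b i ∧
      (univ.filter (fun v : Fin 3 => Fv q v a < Fv q v b)).card =
        if elecEquiv q b i = elecEquiv q a i + 1 then 2 else 1 := by
  have hne : elecEquiv q a ≠ elecEquiv q b := fun h => hab ((elecEquiv q).injective h)
  have hS : (univ.filter (fun i : Fin q => elecEquiv q a i ≠ elecEquiv q b i)).Nonempty := by
    rw [Function.ne_iff] at hne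
    obtain ⟨i, hi⟩ := hne
    exact ⟨i, by simpa using hi⟩
  set i := (univ.filter (fun i : Fin q => elecEquiv q a i ≠ elecEquiv q b i)).min' hS with hi
  have hidiff : elecEquiv q a i ≠ elecEquiv q b i := by
    have := Finset.min'_mem _ hS
    simpa using this
  have hlow : ∀ j, j < i → elecEquiv q a j = elecEquiv q b j := by
    intro j hj
    by_contra h
    exact absurd (Finset.min'_le _ j (by simpa using h)) (not_le.mpr hj)
  refine ⟨i, hlow, hidiff, ?_⟩
  have hchar : ∀ v : Fin 3,
      (Fv q v a < Fv q v b ↔ dig v (elecEquiv q a i) < dig v (elecEquiv q b i)) := by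
    intro v
    rw [lex_lt_iff]
    constructor
    · rintro ⟨k, hk1, hk2⟩
      simp only [Fv, ofLex_toLex] at hk1 hk2
      rcases lt_trichotomy k i with h | h | h
      · rw [hlow k h] at hk2; exact absurd hk2 (lt_irrefl _)
      · rwa [h] at hk2
      · exact absurd (dig_inj v _ _ (hk1 i h)) hidiff
    · intro h
      exact ⟨i, fun j hj => by simp [Fv, hlow j hj], by simpa [Fv] using h⟩
  rw [Finset.filter_congr (fun v _ => by rw [hchar v])]
  exact count_dig _ _ hidiff

lemma Fv_lt_irrefl (q : ℕ) (v : Fin 3) (x : Fin (3 ^ q)) : ¬ Fv q v x < Fv q v x :=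
  fun h => by
    obtain ⟨k, -, hk⟩ := lex_lt_iff.mp h
    exact lt_irrefl _ hk

noncomputable def refl3 (q : ℕ) (a b : Fin (3 ^ q)) : Fin (3 ^ q) :=
  (elecEquiv q).symm (fun j => elecEquiv q a j + elecEquiv q a j - elecEquiv q b j)

lemma refl3_digit (q : ℕ) (a b : Fin (3 ^ q)) (j : Fin q) :
    elecEquiv q (refl3 q a b) j =
      elecEquiv q a j + elecEquiv q a j - elecEquiv q b j := by
  simp [refl3]

lemma refl3_refl3 (q : ℕ) (a b : Fin (3 ^ q)) : refl3 q a (refl3 q a b) = b := by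
  apply (elecEquiv q).injective
  funext j
  rw [refl3_digit, refl3_digit]
  ring

lemma refl3_ne (q : ℕ) (a b : Fin (3 ^ q)) (hab : b ≠ a) : refl3 q a b ≠ a := by
  intro h
  apply hab
  apply (elecEquiv q).injective
  funext j
  have e := congrFun (congrArg (elecEquiv q) h) j
  rw [refl3_digit] at e
  linear_combination -e

lemma Fv_inj (q : ℕ) (v : Fin 3) : Function.Injective (Fv q v) := by
  intro x y h
  apply (elecEquiv q).injective
  funext j
  exact dig_inj v _ _ (congrFun h j)

lemma defeat_flip (q : ℕ) (a b : Fin (3 ^ q)) (hab : b ≠ a) :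
    (2 ≤ (univ.filter (fun v : Fin 3 => Fv q v a < Fv q v b)).card) ↔
    ¬ (2 ≤ (univ.filter (fun v : Fin 3 => Fv q v a < Fv q v (refl3 q a b))).card) := by
  obtain ⟨i, hlow, hdiff, hcard⟩ := main_count q a b (Ne.symm hab)
  obtain ⟨i', hlow', hdiff', hcard'⟩ :=
    main_count q a (refl3 q a b) (Ne.symm (refl3_ne q a b hab))
  have key : ∀ j, elecEquiv q a j = elecEquiv q (refl3 q a b) j ↔
      elecEquiv q a j = elecEquiv q b j := by
    intro j
    rw [refl3_digit]
    constructor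
    · intro h; linear_combination -h
    · intro h; linear_combination -h
  have hii : i = i' := by
    rcases lt_trichotomy i i' with h | h | h
    · exact absurd ((key i).mp (hlow' i h)) hdiff
    · exact h
    · exact absurd ((key i').mpr (hlow i' h)) hdiff'
  have hcond : elecEquiv q (refl3 q a b) i' = elecEquiv q a i' + 1 ↔
      elecEquiv q a i = elecEquiv q b i + 1 := by
    rw [← hii, refl3_digit]
    constructor
    · intro h; linear_combination h
    · intro h; linear_combination h
  rw [hcard, hcard']
  simp only [hcond, cond_flip _ _ hdiff]
  split_ifs with h <;> simp

theorem exists_flat_three_voter_election (q : ℕ) (hq : 1 ≤ q) :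
    ∃ pref : Fin 3 → Fin (3 ^ q) → Fin (3 ^ q) → Prop,
      (∀ v, IsStrictTotalOrder (Fin (3 ^ q)) (pref v)) ∧
      (∀ a : Fin (3 ^ q),
        (univ.filter (fun b =>
          2 ≤ (univ.filter (fun v : Fin 3 => pref v a b)).card)).card = (3 ^ q - 1) / 2) ∧
      (∀ a b : Fin (3 ^ q), a ≠ b → ¬ ∀ v : Fin 3, pref v a b) := by
  refine ⟨fun v x y => Fv q v x < Fv q v y, fun v => ?_, ?_, ?_⟩
  · haveI hso : IsStrictOrder (Lex (Fin q → ℕ)) (· < ·) := Pi.Lex.isStrictOrder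
    have htri := Pi.isTrichotomous_lex (fun i j : Fin q => i < j)
      (@fun _ (m n : ℕ) => m < n) (wellFounded_lt)
    exact
      { trichotomous := fun x y hxy hyx => by
          rcases @trichotomous _ _ htri (ofLex (Fv q v x)) (ofLex (Fv q v y)) with h | h | h
          · exact absurd h hxy
          · exact Fv_inj q v h
          · exact absurd h hyx
        irrefl := fun x => Fv_lt_irrefl q v x
        trans := fun x y z h1 h2 => hso.toIsTrans.trans _ _ _ h1 h2 }
  · intro a
    classical
    set D := univ.filter (fun b : Fin (3 ^ q) =>
      2 ≤ (univ.filter (fun v : Fin 3 => Fv q v a < Fv q v b)).card) with hD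
    have haD : a ∉ D := by
      simp only [hD, mem_filter, mem_univ, true_and]
      have : (univ.filter (fun v : Fin 3 => Fv q v a < Fv q v a)) = ∅ :=
        Finset.filter_false_of_mem (fun v _ => Fv_lt_irrefl q v a)
      rw [this]
      simp
    have hDsub : D ⊆ univ.erase a := by
      intro b hb
      exact mem_erase.mpr ⟨fun h => haD (h ▸ hb), mem_univ b⟩
    have hmemD : ∀ b, b ∈ D ↔
        2 ≤ (univ.filter (fun v : Fin 3 => Fv q v a < Fv q v b)).card := by
      intro b; simp [hD]
    have hcards : D.card = ((univ.erase a) \ D).card := by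
      apply Finset.card_bij' (fun b _ => refl3 q a b) (fun c _ => refl3 q a c)
      · intro b hb
        have hba : b ≠ a := fun h => haD (h ▸ hb)
        rw [mem_sdiff, mem_erase]
        refine ⟨⟨refl3_ne q a b hba, mem_univ _⟩, ?_⟩
        rw [hmemD]
        exact (defeat_flip q a b hba).mp ((hmemD b).mp hb)
      · intro c hc
        rw [mem_sdiff, mem_erase] at hc
        obtain ⟨⟨hca, -⟩, hcD⟩ := hc
        rw [hmemD]
        rw [hmemD] at hcD
        have := (defeat_flip q a (refl3 q a c) (refl3_ne q a c hca)).mpr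
        rw [refl3_refl3] at this
        exact this hcD
      · intro b _; exact refl3_refl3 q a b
      · intro c _; exact refl3_refl3 q a c
    have htot : ((univ.erase a) \ D).card + D.card = (univ.erase a).card :=
      Finset.card_sdiff_add_card_eq_card hDsub
    have hcarde : (univ.erase a).card = 3 ^ q - 1 := by
      rw [Finset.card_erase_of_mem (mem_univ a), Finset.card_univ, Fintype.card_fin]
    have h3 : 1 ≤ 3 ^ q := Nat.one_le_pow _ _ (by norm_num)
    have hodd : 3 ^ q % 2 = 1 := by simp [Nat.pow_mod]
    omega
  · intro a b hab hall
    obtain ⟨i, -, -, hcard⟩ := main_count q a b hab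
    have : (univ.filter (fun v : Fin 3 => Fv q v a < Fv q v b)) = univ :=
      Finset.filter_eq_self.mpr (fun v _ => hall v)
    rw [this] at hcard
    simp only [Finset.card_univ, Fintype.card_fin] at hcard
    split_ifs at hcard <;> omega
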